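/- arXiv:1010.2356 — 2 statements merged into one kernel-verified Lean document; each statement's English description precedes it below -/
import Mathlib

section
/- Assume conditions (P0)–(P3) hold for the sequence (q_{M_L}, φ_{M_L}) indexed by even positive integers L, and let (s_L) be positive reals with s_L / ((L²/M_L²) ∨ log L) → ∞ as L → ∞. Then lim_{L→∞} sup_{t ≥ s_L} sup_{x ∈ T_L} |∑_{y ∈ T'_L} exp(−t(1 − φ_{M_L}(2π y / L))) e^{2πi x·y / L}| = 0. (For the rate-one continuous-time random walk X^L on the torus T_L with jump distribution q_{M_L}, this quantity equals L²|P₀(X^L_t = x) − L^{−2}| by Fourier inversion, so the walk becomes uniform on T_L by time s_L.) -/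
open Filter MeasureTheory Real Finset
open scoped BigOperators

noncomputable section

/-- `T_k = (−k/2, k/2]² ∩ ℤ²`. -/
def Tset (k : ℝ) : Finset (ℤ × ℤ) :=
  Finset.Ioc ⌊-k / 2⌋ ⌊k / 2⌋ ×ˢ Finset.Ioc ⌊-k / 2⌋ ⌊k / 2⌋

/-- `Λ_k = [−k/2, k/2]² ∩ ℤ²`. -/
def Lam (k : ℝ) : Finset (ℤ × ℤ) :=
  Finset.Icc ⌈-k / 2⌉ ⌊k / 2⌋ ×ˢ Finset.Icc ⌈-k / 2⌉ ⌊k / 2⌋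

open scoped Classical in
/-- `D_k = {x ∈ ℤ² : |x| ≤ k/2}` (Euclidean norm). -/
def Dset (k : ℝ) : Finset (ℤ × ℤ) :=
  (Lam k).filter fun x => Real.sqrt ((x.1 : ℝ) ^ 2 + (x.2 : ℝ) ^ 2) ≤ k / 2

/-- sup (ℓ∞) norm on ℝ². -/
def supNorm (θ : ℝ × ℝ) : ℝ := max |θ.1| |θ.2|

/-- the closed ℓ∞-ball `B(r)` in ℝ². -/
def Bset (r : ℝ) : Set (ℝ × ℝ) := {θ | supNorm θ ≤ r}

/-- squared Euclidean norm `|θ|²` on ℝ². -/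
def sqNormR (θ : ℝ × ℝ) : ℝ := θ.1 ^ 2 + θ.2 ^ 2

/-- squared Euclidean norm `|y|²` of a lattice point. -/
def sqNorm (y : ℤ × ℤ) : ℝ := (y.1 : ℝ) ^ 2 + (y.2 : ℝ) ^ 2

/-- dot product `θ · x` of θ ∈ ℝ² and x ∈ ℤ². -/
def dotP (θ : ℝ × ℝ) (x : ℤ × ℤ) : ℝ := θ.1 * x.1 + θ.2 * x.2

/-- `e^{iθ·x}`. -/
def cexp (θ : ℝ × ℝ) (x : ℤ × ℤ) : ℂ := Complex.exp (Complex.I * (dotP θ x : ℂ))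

/-- `e^{2πi x·y/L}`. -/
def eL (L : ℕ) (x y : ℤ × ℤ) : ℂ :=
  Complex.exp (2 * (π : ℂ) * Complex.I * ((x.1 * y.1 + x.2 * y.2 : ℤ) : ℂ) / (L : ℂ))

/-- the filter of large even natural numbers. -/
def evenAtTop : Filter ℕ := Filter.atTop ⊓ Filter.principal {n | Even n}

/-- the Fourier point `2πy/L ∈ ℝ²`. -/
def fourierTheta (L : ℕ) (y : ℤ × ℤ) : ℝ × ℝ := (2 * π * y.1 / L, 2 * π * y.2 / L)

/-- the characteristic function `φ(θ) = ∑_x e^{iθ·x} q(x)` of a jump distribution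
supported in `Λ_m`; it is real-valued by symmetry, so we take the real part. -/
def phiOf (m : ℕ) (qq : ℤ × ℤ → ℝ) (θ : ℝ × ℝ) : ℝ :=
  (∑ x ∈ Lam m, cexp θ x * (qq x : ℂ)).re

/-- Condition (P0): `q` is a symmetric probability distribution supported in
`Λ'_m = Λ_m \ {0}`, with values in [0,1] and equal, positive coordinate variances. -/
def CondP0 (m : ℕ) (qq : ℤ × ℤ → ℝ) : Prop :=
  (∀ x, 0 ≤ qq x ∧ qq x ≤ 1) ∧
  (∀ x, x ∉ (Lam m).erase 0 → qq x = 0) ∧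
  (∑ x ∈ (Lam m).erase 0, qq x = 1) ∧
  (∀ x, qq (-x) = qq x) ∧
  (∑ x ∈ Lam m, (x.1 : ℝ) ^ 2 * qq x = ∑ x ∈ Lam m, (x.2 : ℝ) ^ 2 * qq x) ∧
  (0 < ∑ x ∈ Lam m, (x.1 : ℝ) ^ 2 * qq x)

/-- Condition (P1) with constant `σ² = σ2`. -/
def CondP1 (M : ℕ → ℕ) (q : ℕ → ℤ × ℤ → ℝ) (σ2 : ℝ) : Prop :=
  ∀ ε > (0 : ℝ), ∃ δ > (0 : ℝ), ∀ᶠ L in evenAtTop, ∀ θ : ℝ × ℝ, θ ≠ 0 →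
    supNorm θ ≤ δ / M L →
    (1 - phiOf (M L) (q L) θ) / (σ2 * (M L : ℝ) ^ 2 * sqNormR θ / 2)
      ∈ Set.Ioo (1 - ε) (1 + ε)

/-- Condition (P2). -/
def CondP2 (M : ℕ → ℕ) (q : ℕ → ℤ × ℤ → ℝ) : Prop :=
  ∀ δ > (0 : ℝ), ∃ δ' > (0 : ℝ), ∃ ζ > (0 : ℝ), ∀ᶠ L in evenAtTop, ∀ θ : ℝ × ℝ,
    supNorm θ ≤ δ' → ¬ supNorm θ ≤ δ / M L → 1 - phiOf (M L) (q L) θ > ζ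

/-- Condition (P3). -/
def CondP3 (M : ℕ → ℕ) (q : ℕ → ℤ × ℤ → ℝ) : Prop :=
  ∀ ε > (0 : ℝ), ∀ a > (0 : ℝ), ∀ᶠ L in evenAtTop, ∀ θ : ℝ × ℝ,
    supNorm θ ≤ π → ¬ supNorm θ ≤ a → |phiOf (M L) (q L) θ| < ε

/-- `G_L(x,λ) = L⁻² ∑_{y ∈ T_L} e^{2πi x·y/L} / (1 + λ − φ_{M_L}(2πy/L))`. -/
def Gfun (M : ℕ → ℕ) (q : ℕ → ℤ × ℤ → ℝ) (L : ℕ) (x : ℤ × ℤ) (lam : ℝ) : ℂ :=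
  ((L : ℂ) ^ 2)⁻¹ * ∑ y ∈ Tset L,
    eL L x y / ((1 + lam - phiOf (M L) (q L) (fourierTheta L y) : ℝ) : ℂ)

open scoped Classical in
/-- the annulus `A_L(α, v)`. -/
def Aset (L : ℕ) (α v : ℝ) : Finset (ℤ × ℤ) :=
  if α = 0 then (Tset v).erase 0
  else if α = 1 then Tset L \ Tset (L / v)
  else Tset ((L : ℝ) ^ α * v) \ Tset ((L : ℝ) ^ α / v)

/-- the uniform distribution `u_m` on `Λ'_m = Λ_m \ {0}`. -/
def uunif (m : ℕ) (x : ℤ × ℤ) : ℝ :=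
  if x ∈ (Lam m).erase 0 then (((Lam m).erase 0).card : ℝ)⁻¹ else 0

/-- `q_M(x) = c_M f(x/M) u_M(x)`. -/
def qMf (f : ℝ × ℝ → ℝ) (c : ℕ → ℝ) (m : ℕ) (x : ℤ × ℤ) : ℝ :=
  c m * f ((x.1 : ℝ) / m, (x.2 : ℝ) / m) * uunif m x

lemma sum_exp_neg_abs_le (s : Finset ℤ) : ∑ n ∈ s, Real.exp (-|(n : ℝ)|) ≤ 4 := by
  have hr0 : (0:ℝ) ≤ Real.exp (-1) := (Real.exp_pos _).le
  have hrhalf : Real.exp (-1) ≤ 1/2 := by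
    rw [Real.exp_neg]
    rw [inv_le_comm₀ (Real.exp_pos 1) (by norm_num)]
    calc (1/2 : ℝ)⁻¹ = 2 := by norm_num
    _ ≤ Real.exp 1 := by linarith [Real.add_one_le_exp (1:ℝ)]
  have hr1 : Real.exp (-1) < 1 := lt_of_le_of_lt hrhalf (by norm_num)
  have hkey : ∀ n : ℤ, Real.exp (-|(n : ℝ)|) = Real.exp (-1) ^ n.natAbs := by
    intro n
    rw [← Real.exp_nat_mul]
    congr 1
    rw [Nat.cast_natAbs]
    push_cast
    ring
  have htsum : ∑' k : ℕ, Real.exp (-1) ^ k ≤ 2 := by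
    rw [tsum_geometric_of_lt_one hr0 hr1]
    rw [inv_le_comm₀ (by linarith) (by norm_num)]
    linarith
  have hsummable : Summable (fun k : ℕ => Real.exp (-1) ^ k) :=
    summable_geometric_of_lt_one hr0 hr1
  have hpart : ∀ u : Finset ℤ, (∀ a ∈ u, ∀ b ∈ u, a.natAbs = b.natAbs → a = b) →
      ∑ n ∈ u, Real.exp (-|(n : ℝ)|) ≤ 2 := by
    intro u hinj
    calc ∑ n ∈ u, Real.exp (-|(n : ℝ)|) = ∑ n ∈ u, Real.exp (-1) ^ n.natAbs :=
          Finset.sum_congr rfl fun n _ => hkey n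
      _ = ∑ k ∈ u.image Int.natAbs, Real.exp (-1) ^ k := (Finset.sum_image hinj).symm
      _ ≤ ∑' k : ℕ, Real.exp (-1) ^ k :=
          Summable.sum_le_tsum _ (fun k _ => pow_nonneg hr0 k) hsummable
      _ ≤ 2 := htsum
  have hsplit := Finset.sum_filter_add_sum_filter_not s (fun n => 0 ≤ n)
    (fun n => Real.exp (-|(n : ℝ)|))
  have h1 : ∑ n ∈ s.filter (fun n => 0 ≤ n), Real.exp (-|(n : ℝ)|) ≤ 2 := by
    apply hpart
    intro a ha b hb hab
    simp only [Finset.mem_filter] at ha hb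
    omega
  have h2 : ∑ n ∈ s.filter (fun n => ¬ 0 ≤ n), Real.exp (-|(n : ℝ)|) ≤ 2 := by
    apply hpart
    intro a ha b hb hab
    simp only [Finset.mem_filter] at ha hb
    omega
  linarith

lemma int_abs_le_sq (a : ℤ) : |(a : ℝ)| ≤ (a : ℝ) ^ 2 := by
  rcases eq_or_ne a 0 with h | h
  · simp [h]
  · have h1 : (1 : ℤ) ≤ |a| := Int.one_le_abs h
    have h1' : (1 : ℝ) ≤ |(a : ℝ)| := by
      rw [← Int.cast_abs]
      exact_mod_cast h1
    nlinarith [sq_abs (a : ℝ), abs_nonneg (a : ℝ)]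

lemma norm_exp_mul_eL (L : ℕ) (x y : ℤ × ℤ) (r : ℝ) :
    ‖(Real.exp r : ℂ) * eL L x y‖ = Real.exp r := by
  rw [norm_mul]
  have h1 : ‖((Real.exp r : ℝ) : ℂ)‖ = Real.exp r := by
    rw [Complex.norm_real]
    exact Real.norm_of_nonneg (Real.exp_pos r).le
  have h2 : ‖eL L x y‖ = 1 := by
    unfold eL
    have heq : 2 * (π : ℂ) * Complex.I * (((x.1 * y.1 + x.2 * y.2 : ℤ) : ℤ) : ℂ) / (L : ℂ)
        = ((2 * π * ((x.1 * y.1 + x.2 * y.2 : ℤ) : ℝ) / L : ℝ) : ℂ) * Complex.I := by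
      push_cast
      ring
    rw [heq]
    exact Complex.norm_exp_ofReal_mul_I _
  rw [h1, h2, mul_one]

set_option maxHeartbeats 1000000 in
/-- Theorem 1.7 (uniformity on the torus): if (P0)–(P3) hold and
`s_L/((L²/M_L²) ∨ log L) → ∞`, then
`sup_{t ≥ s_L} sup_{x ∈ T_L} L²|P₀(Xᴸ_t = x) − L⁻²| → 0`, where by Fourier
inversion the latter quantity equals
`|∑_{y ∈ T'_L} exp(−t(1 − φ_{M_L}(2πy/L))) e^{2πi x·y/L}|`. -/
theorem uniform_on_torus (M : ℕ → ℕ) (q : ℕ → ℤ × ℤ → ℝ) (σ2 : ℝ) (hσ : 0 < σ2)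
    (hMeven : ∀ L : ℕ, Even (M L) ∧ 0 < M L)
    (hP0 : ∀ L : ℕ, Even L → 0 < L → CondP0 (M L) (q L))
    (hP1 : CondP1 M q σ2) (hP2 : CondP2 M q) (hP3 : CondP3 M q)
    (s : ℕ → ℝ) (hs : ∀ L, 0 < s L)
    (hsL : Tendsto (fun L : ℕ => s L / max ((L : ℝ) ^ 2 / (M L : ℝ) ^ 2) (Real.log L))
      evenAtTop atTop) :
    ∀ ε > (0 : ℝ), ∀ᶠ L in evenAtTop, ∀ t : ℝ, s L ≤ t → ∀ x ∈ Tset L,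
      ‖∑ y ∈ (Tset L).erase 0,
          (Real.exp (-(t * (1 - phiOf (M L) (q L) (fourierTheta L y)))) : ℂ) * eL L x y‖
        < ε := by
  classical
  intro ε hε
  obtain ⟨δ, hδpos, hE1⟩ := hP1 (1/2) (by norm_num)
  obtain ⟨δ', hδ'pos, ζ, hζpos, hE2⟩ := hP2 δ hδpos
  have hE3 := hP3 (1/2) (by norm_num) δ' hδ'pos
  set ζ' : ℝ := min ζ (1/2) with hζ'def
  have hζ'pos : 0 < ζ' := lt_min hζpos (by norm_num)
  set K : ℝ := max ((3 + |Real.log (2/ε)|) / ζ')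
      ((2 * max 1 (Real.log (32/ε))) / (σ2 * π ^ 2)) with hKdef
  have hπpos : (0:ℝ) < π := Real.pi_pos
  have hKpos : 0 < K := lt_of_lt_of_le (by positivity) (le_max_left _ _)
  have hEK : ∀ᶠ L in evenAtTop,
      K ≤ s L / max ((L : ℝ) ^ 2 / (M L : ℝ) ^ 2) (Real.log L) :=
    hsL.eventually_ge_atTop K
  have hle1 : evenAtTop ≤ atTop := inf_le_left
  have hle2 : evenAtTop ≤ Filter.principal {n : ℕ | Even n} := inf_le_right
  have hE4 : ∀ᶠ L : ℕ in evenAtTop, 3 ≤ L :=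
    (Filter.eventually_ge_atTop 3).filter_mono hle1
  have hE5 : ∀ᶠ L : ℕ in evenAtTop, Even L :=
    (Filter.eventually_principal.2 fun x hx => hx).filter_mono hle2
  filter_upwards [hE1, hE2, hE3, hEK, hE4, hE5] with L h1 h2 h3 hK hL3 hLeven
  intro t ht x hx
  obtain ⟨k, hk⟩ := hLeven
  have hkpos : 0 < k := by omega
  have hLposN : 0 < L := by omega
  have hLpos : (0:ℝ) < L := by exact_mod_cast hLposN
  have hMpos : (0:ℝ) < (M L : ℝ) := by exact_mod_cast (hMeven L).2
  have htpos : 0 < t := lt_of_lt_of_le (hs L) ht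
  -- torus structure
  have hfl1 : (⌊-(L:ℝ)/2⌋ : ℤ) = -(k : ℤ) := by
    have : (-(L:ℝ)/2) = ((-(k:ℤ) : ℤ) : ℝ) := by rw [hk]; push_cast; ring
    rw [this, Int.floor_intCast]
  have hfl2 : (⌊(L:ℝ)/2⌋ : ℤ) = (k : ℤ) := by
    have : ((L:ℝ)/2) = (((k:ℤ) : ℤ) : ℝ) := by rw [hk]; push_cast; ring
    rw [this, Int.floor_intCast]
  have hTeq : Tset (L:ℝ) = Finset.Ioc (-(k:ℤ)) (k:ℤ) ×ˢ Finset.Ioc (-(k:ℤ)) (k:ℤ) := by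
    unfold Tset
    rw [hfl1, hfl2]
  have hmemT : ∀ y : ℤ × ℤ, y ∈ Tset (L:ℝ) → |(y.1 : ℝ)| ≤ k ∧ |(y.2 : ℝ)| ≤ k := by
    intro y hy
    rw [hTeq, Finset.mem_product, Finset.mem_Ioc, Finset.mem_Ioc] at hy
    constructor
    · rw [abs_le]; constructor
      · exact_mod_cast (hy.1.1).le
      · exact_mod_cast hy.1.2
    · rw [abs_le]; constructor
      · exact_mod_cast (hy.2.1).le
      · exact_mod_cast hy.2.2
  have hθπ : ∀ y ∈ Tset (L:ℝ), supNorm (fourierTheta L y) ≤ π := by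
    intro y hy
    obtain ⟨hy1, hy2⟩ := hmemT y hy
    have hb : ∀ a : ℤ, |(a : ℝ)| ≤ k → |2 * π * (a : ℝ) / L| ≤ π := by
      intro a ha
      rw [abs_div, abs_mul, abs_of_nonneg (by positivity : (0:ℝ) ≤ 2 * π),
        abs_of_nonneg hLpos.le, div_le_iff₀ hLpos]
      have hLk : (L : ℝ) = 2 * k := by rw [hk]; push_cast; ring
      rw [hLk]
      nlinarith only [ha, hπpos, abs_nonneg ((a:ℝ))]
    exact max_le (hb y.1 hy1) (hb y.2 hy2)
  -- β and key inequalities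
  set β : ℝ := t * σ2 * π ^ 2 * (M L : ℝ) ^ 2 / (L : ℝ) ^ 2 with hβdef
  have hmaxpos : 0 < max ((L : ℝ) ^ 2 / (M L : ℝ) ^ 2) (Real.log L) :=
    lt_of_lt_of_le (by positivity) (le_max_left _ _)
  have hsK : K * max ((L : ℝ) ^ 2 / (M L : ℝ) ^ 2) (Real.log L) ≤ s L := by
    rw [le_div_iff₀ hmaxpos] at hK
    exact hK
  have hsLM : K * ((L : ℝ) ^ 2 / (M L : ℝ) ^ 2) ≤ s L :=
    le_trans (mul_le_mul_of_nonneg_left (le_max_left _ _) hKpos.le) hsK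
  have hsLlog : K * Real.log L ≤ s L :=
    le_trans (mul_le_mul_of_nonneg_left (le_max_right _ _) hKpos.le) hsK
  have hβK : K * (σ2 * π ^ 2) ≤ β := by
    have hrw : K * (σ2 * π ^ 2)
        = (K * ((L:ℝ) ^ 2 / (M L : ℝ) ^ 2)) * (σ2 * π ^ 2 * (M L : ℝ) ^ 2 / (L:ℝ) ^ 2) := by
      field_simp
    rw [hrw]
    calc (K * ((L:ℝ) ^ 2 / (M L : ℝ) ^ 2)) * (σ2 * π ^ 2 * (M L : ℝ) ^ 2 / (L:ℝ) ^ 2)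
        ≤ s L * (σ2 * π ^ 2 * (M L : ℝ) ^ 2 / (L:ℝ) ^ 2) :=
          mul_le_mul_of_nonneg_right hsLM (by positivity)
      _ ≤ t * (σ2 * π ^ 2 * (M L : ℝ) ^ 2 / (L:ℝ) ^ 2) :=
          mul_le_mul_of_nonneg_right ht (by positivity)
      _ = β := by rw [hβdef]; ring
  have hβ2 : 2 * max 1 (Real.log (32/ε)) ≤ β := by
    have h5 : (2 * max 1 (Real.log (32/ε))) / (σ2 * π ^ 2) ≤ K := le_max_right _ _
    have h6 : 2 * max 1 (Real.log (32/ε)) ≤ K * (σ2 * π ^ 2) := by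
      rw [div_le_iff₀ (by positivity : (0:ℝ) < σ2 * π ^ 2)] at h5
      exact h5
    exact le_trans h6 hβK
  have hβge2 : 2 ≤ β := le_trans (by linarith only [le_max_left 1 (Real.log (32/ε))]) hβ2
  -- norm of terms
  have hsum1 : ‖∑ y ∈ (Tset (L:ℝ)).erase 0,
      (Real.exp (-(t * (1 - phiOf (M L) (q L) (fourierTheta L y)))) : ℂ) * eL L x y‖
      ≤ ∑ y ∈ (Tset (L:ℝ)).erase 0,
        Real.exp (-(t * (1 - phiOf (M L) (q L) (fourierTheta L y)))) := by
    refine le_trans (norm_sum_le _ _) (le_of_eq (Finset.sum_congr rfl fun y _ => ?_))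
    exact norm_exp_mul_eL L x y _
  set f : ℤ × ℤ → ℝ :=
    fun y => Real.exp (-(t * (1 - phiOf (M L) (q L) (fourierTheta L y)))) with hfdef
  set S : Finset (ℤ × ℤ) := (Tset (L:ℝ)).erase 0 with hSdef
  set P : ℤ × ℤ → Prop := fun y => supNorm (fourierTheta L y) ≤ δ / (M L) with hPdef
  have hsplit := Finset.sum_filter_add_sum_filter_not S P f
  -- small-θ part
  have hsmall : ∑ y ∈ S.filter P, f y ≤ 16 * Real.exp (-(β/2)) := by
    have hterm : ∀ y ∈ S.filter P,
        f y ≤ Real.exp (-(β/2)) * (Real.exp (-|(y.1:ℝ)|) * Real.exp (-|(y.2:ℝ)|)) := by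
      intro y hy
      rw [Finset.mem_filter] at hy
      obtain ⟨hyS, hyP⟩ := hy
      have hy0 : y ≠ 0 := Finset.ne_of_mem_erase hyS
      have hθne : fourierTheta L y ≠ 0 := by
        intro h
        apply hy0
        have ha : 2 * π * (y.1:ℝ) / L = 0 := congrArg Prod.fst h
        have hb : 2 * π * (y.2:ℝ) / L = 0 := congrArg Prod.snd h
        have hL0 : (L:ℝ) ≠ 0 := hLpos.ne'
        rw [div_eq_zero_iff] at ha hb
        have ha' : (y.1 : ℝ) = 0 := by
          rcases ha with h | h
          · rcases mul_eq_zero.1 h with h' | h'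
            · exact absurd h' (by positivity)
            · exact h'
          · exact absurd h hL0
        have hb' : (y.2 : ℝ) = 0 := by
          rcases hb with h | h
          · rcases mul_eq_zero.1 h with h' | h'
            · exact absurd h' (by positivity)
            · exact h'
          · exact absurd h hL0
        have hy1 : y.1 = 0 := by exact_mod_cast ha'
        have hy2 : y.2 = 0 := by exact_mod_cast hb'
        exact Prod.ext hy1 hy2
      have hratio := h1 (fourierTheta L y) hθne hyP
      have hsqpos : 0 < sqNormR (fourierTheta L y) := by
        have h0 : fourierTheta L y ≠ 0 := hθne
        by_contra hcon
        push_neg at hcon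
        have h1' : sqNormR (fourierTheta L y) = 0 := le_antisymm hcon (by
          unfold sqNormR; positivity)
        unfold sqNormR at h1'
        apply h0
        have hx1 : (fourierTheta L y).1 = 0 := by nlinarith [sq_nonneg (fourierTheta L y).1, sq_nonneg (fourierTheta L y).2]
        have hx2 : (fourierTheta L y).2 = 0 := by nlinarith [sq_nonneg (fourierTheta L y).1, sq_nonneg (fourierTheta L y).2]
        exact Prod.ext hx1 hx2
      have hDpos : 0 < σ2 * (M L : ℝ) ^ 2 * sqNormR (fourierTheta L y) / 2 := by positivity
      have hlow : σ2 * (M L : ℝ) ^ 2 * sqNormR (fourierTheta L y) / 4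
          < 1 - phiOf (M L) (q L) (fourierTheta L y) := by
        have hr := hratio.1
        rw [lt_div_iff₀ hDpos] at hr
        linarith only [hr]
      have hsqeq : sqNormR (fourierTheta L y)
          = 4 * π ^ 2 * ((y.1:ℝ) ^ 2 + (y.2:ℝ) ^ 2) / (L:ℝ) ^ 2 := by
        simp only [sqNormR, fourierTheta]
        field_simp
        ring
      have hq2 : β * ((y.1:ℝ) ^ 2 + (y.2:ℝ) ^ 2)
          ≤ t * (1 - phiOf (M L) (q L) (fourierTheta L y)) := by
        have h5 : σ2 * (M L : ℝ) ^ 2 * sqNormR (fourierTheta L y) / 4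
            ≤ 1 - phiOf (M L) (q L) (fourierTheta L y) := hlow.le
        calc β * ((y.1:ℝ) ^ 2 + (y.2:ℝ) ^ 2)
            = t * (σ2 * (M L : ℝ) ^ 2
                * (4 * π ^ 2 * ((y.1:ℝ) ^ 2 + (y.2:ℝ) ^ 2) / (L:ℝ) ^ 2) / 4) := by
              rw [hβdef]; ring
          _ = t * (σ2 * (M L : ℝ) ^ 2 * sqNormR (fourierTheta L y) / 4) := by rw [hsqeq]
          _ ≤ t * (1 - phiOf (M L) (q L) (fourierTheta L y)) :=
              mul_le_mul_of_nonneg_left h5 htpos.le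
      have habs1 : |(y.1:ℝ)| ≤ (y.1:ℝ) ^ 2 := int_abs_le_sq y.1
      have habs2 : |(y.2:ℝ)| ≤ (y.2:ℝ) ^ 2 := int_abs_le_sq y.2
      have hone : (1:ℝ) ≤ |(y.1:ℝ)| + |(y.2:ℝ)| := by
        have : y.1 ≠ 0 ∨ y.2 ≠ 0 := by
          by_contra hcc
          push_neg at hcc
          exact hy0 (Prod.ext hcc.1 hcc.2)
        rcases this with h | h
        · have : (1:ℤ) ≤ |y.1| := Int.one_le_abs h
          have h1' : (1:ℝ) ≤ |(y.1:ℝ)| := by rw [← Int.cast_abs]; exact_mod_cast this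
          linarith [abs_nonneg (y.2:ℝ)]
        · have : (1:ℤ) ≤ |y.2| := Int.one_le_abs h
          have h1' : (1:ℝ) ≤ |(y.2:ℝ)| := by rw [← Int.cast_abs]; exact_mod_cast this
          linarith [abs_nonneg (y.1:ℝ)]
      have hint : (1:ℝ) + |(y.1:ℝ)| + |(y.2:ℝ)| ≤ 2 * ((y.1:ℝ) ^ 2 + (y.2:ℝ) ^ 2) := by
        linarith only [habs1, habs2, hone]
      calc f y ≤ Real.exp (-(β * ((y.1:ℝ) ^ 2 + (y.2:ℝ) ^ 2))) :=
            Real.exp_le_exp.2 (by linarith only [hq2])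
        _ ≤ Real.exp (-(β/2) + -|(y.1:ℝ)| + -|(y.2:ℝ)|) := by
            apply Real.exp_le_exp.2
            nlinarith only [hβge2, hint, abs_nonneg (y.1:ℝ), abs_nonneg (y.2:ℝ)]
        _ = Real.exp (-(β/2)) * (Real.exp (-|(y.1:ℝ)|) * Real.exp (-|(y.2:ℝ)|)) := by
            rw [show -(β/2) + -|(y.1:ℝ)| + -|(y.2:ℝ)|
              = -(β/2) + (-|(y.1:ℝ)| + -|(y.2:ℝ)|) by ring, Real.exp_add, Real.exp_add]
    calc ∑ y ∈ S.filter P, f y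
        ≤ ∑ y ∈ S.filter P,
            Real.exp (-(β/2)) * (Real.exp (-|(y.1:ℝ)|) * Real.exp (-|(y.2:ℝ)|)) :=
          Finset.sum_le_sum hterm
      _ ≤ ∑ y ∈ Tset (L:ℝ),
            Real.exp (-(β/2)) * (Real.exp (-|(y.1:ℝ)|) * Real.exp (-|(y.2:ℝ)|)) := by
          apply Finset.sum_le_sum_of_subset_of_nonneg
          · exact (Finset.filter_subset _ _).trans (Finset.erase_subset _ _)
          · intro y _ _
            positivity
      _ = Real.exp (-(β/2)) * ((∑ n ∈ Finset.Ioc (-(k:ℤ)) (k:ℤ), Real.exp (-|(n:ℝ)|))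
            * (∑ n ∈ Finset.Ioc (-(k:ℤ)) (k:ℤ), Real.exp (-|(n:ℝ)|))) := by
          rw [hTeq, ← Finset.mul_sum]
          congr 1
          rw [Finset.sum_mul_sum, Finset.sum_product]
      _ ≤ Real.exp (-(β/2)) * (4 * 4) := by
          have hb := sum_exp_neg_abs_le (Finset.Ioc (-(k:ℤ)) (k:ℤ))
          have hnn : (0:ℝ) ≤ ∑ n ∈ Finset.Ioc (-(k:ℤ)) (k:ℤ), Real.exp (-|(n:ℝ)|) :=
            Finset.sum_nonneg fun n _ => (Real.exp_pos _).le
          apply mul_le_mul_of_nonneg_left _ (Real.exp_pos _).le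
          nlinarith
      _ = 16 * Real.exp (-(β/2)) := by ring
  -- large-θ part
  have hζ'le : ∀ y ∈ S.filter (fun y => ¬ P y), f y ≤ Real.exp (-(t * ζ')) := by
    intro y hy
    rw [Finset.mem_filter] at hy
    obtain ⟨hyS, hyP⟩ := hy
    have hyT : y ∈ Tset (L:ℝ) := Finset.mem_of_mem_erase hyS
    have hπ' := hθπ y hyT
    have hζ'bound : ζ' ≤ 1 - phiOf (M L) (q L) (fourierTheta L y) := by
      by_cases hc : supNorm (fourierTheta L y) ≤ δ'
      · have := h2 (fourierTheta L y) hc hyP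
        calc ζ' ≤ ζ := min_le_left _ _
          _ ≤ _ := this.le
      · have := h3 (fourierTheta L y) hπ' hc
        rw [abs_lt] at this
        calc ζ' ≤ 1/2 := min_le_right _ _
          _ ≤ _ := by linarith [this.2]
    apply Real.exp_le_exp.2
    have : t * ζ' ≤ t * (1 - phiOf (M L) (q L) (fourierTheta L y)) :=
      mul_le_mul_of_nonneg_left hζ'bound htpos.le
    linarith only [this]
  have hcard : ((S.filter (fun y => ¬ P y)).card : ℝ) ≤ (L:ℝ) ^ 2 := by
    have hc1 : (S.filter (fun y => ¬ P y)).card ≤ (Tset (L:ℝ)).card :=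
      Finset.card_le_card ((Finset.filter_subset _ _).trans (Finset.erase_subset _ _))
    have hc2 : (Tset (L:ℝ)).card = L * L := by
      rw [hTeq, Finset.card_product, Int.card_Ioc]
      have : ((k:ℤ) - -(k:ℤ)).toNat = L := by omega
      rw [this]
    have : ((S.filter (fun y => ¬ P y)).card : ℝ) ≤ ((L * L : ℕ) : ℝ) := by
      exact_mod_cast hc2 ▸ hc1
    calc ((S.filter (fun y => ¬ P y)).card : ℝ) ≤ ((L * L : ℕ) : ℝ) := this
      _ = (L:ℝ) ^ 2 := by push_cast; ring
  have hrest : ∑ y ∈ S.filter (fun y => ¬ P y), f y ≤ (L:ℝ) ^ 2 * Real.exp (-(t * ζ')) := by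
    calc ∑ y ∈ S.filter (fun y => ¬ P y), f y
        ≤ (S.filter (fun y => ¬ P y)).card • Real.exp (-(t * ζ')) :=
          Finset.sum_le_card_nsmul _ _ _ hζ'le
      _ = ((S.filter (fun y => ¬ P y)).card : ℝ) * Real.exp (-(t * ζ')) := by
          rw [nsmul_eq_mul]
      _ ≤ (L:ℝ) ^ 2 * Real.exp (-(t * ζ')) :=
          mul_le_mul_of_nonneg_right hcard (Real.exp_pos _).le
  -- numeric bounds
  have hsmallε : 16 * Real.exp (-(β/2)) ≤ ε / 2 := by
    have hm : max 1 (Real.log (32/ε)) ≤ β / 2 := by linarith only [hβ2]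
    have hlog : Real.log (32/ε) ≤ β / 2 := le_trans (le_max_right _ _) hm
    have : Real.exp (-(β/2)) ≤ ε / 32 := by
      calc Real.exp (-(β/2)) ≤ Real.exp (-(Real.log (32/ε))) :=
            Real.exp_le_exp.2 (by linarith only [hlog])
        _ = ε / 32 := by
            rw [Real.exp_neg, Real.exp_log (by positivity)]
            rw [inv_div]
    linarith only [this]
  have hlogL1 : (1:ℝ) ≤ Real.log L := by
    rw [Real.le_log_iff_exp_le hLpos]
    calc Real.exp 1 ≤ 2.7182818286 := (Real.exp_one_lt_d9).le
      _ ≤ 3 := by norm_num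
      _ ≤ (L:ℝ) := by exact_mod_cast hL3
  have htlog : K * Real.log L ≤ t := le_trans hsLlog ht
  have hKζ : 3 + |Real.log (2/ε)| ≤ K * ζ' := by
    have h5 : (3 + |Real.log (2/ε)|) / ζ' ≤ K := le_max_left _ _
    rw [div_le_iff₀ hζ'pos] at h5
    linarith only [h5]
  have hrestε : (L:ℝ) ^ 2 * Real.exp (-(t * ζ')) < ε / 2 := by
    have hLexp : (L:ℝ) ^ 2 = Real.exp (2 * Real.log L) := by
      rw [show (2:ℝ) * Real.log L = Real.log L + Real.log L by ring, Real.exp_add,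
        Real.exp_log hLpos]
      ring
    have htζ : (3 + |Real.log (2/ε)|) * Real.log L ≤ t * ζ' := by
      calc (3 + |Real.log (2/ε)|) * Real.log L ≤ (K * ζ') * Real.log L :=
            mul_le_mul_of_nonneg_right hKζ (by linarith only [hlogL1])
        _ = (K * Real.log L) * ζ' := by ring
        _ ≤ t * ζ' := mul_le_mul_of_nonneg_right htlog hζ'pos.le
    have hexp : 2 * Real.log L - t * ζ' ≤ -1 - |Real.log (2/ε)| := by
      nlinarith only [htζ, hlogL1, abs_nonneg (Real.log (2/ε))]
    have hfin : Real.exp (-1 - |Real.log (2/ε)|) < ε / 2 := by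
      have hxx : -|Real.log (2/ε)| ≤ Real.log (ε/2) := by
        have : Real.log (ε/2) = -Real.log (2/ε) := by
          rw [← Real.log_inv, inv_div]
        rw [this]
        exact neg_le_neg (le_abs_self _)
      calc Real.exp (-1 - |Real.log (2/ε)|)
          = Real.exp (-1) * Real.exp (-|Real.log (2/ε)|) := by
            rw [← Real.exp_add]; ring_nf
        _ ≤ Real.exp (-1) * Real.exp (Real.log (ε/2)) :=
            mul_le_mul_of_nonneg_left (Real.exp_le_exp.2 hxx) (Real.exp_pos _).le
        _ = Real.exp (-1) * (ε/2) := by rw [Real.exp_log (by positivity)]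
        _ < 1 * (ε/2) := by
            apply mul_lt_mul_of_pos_right _ (by positivity)
            calc Real.exp (-1) < Real.exp 0 := Real.exp_lt_exp.2 (by norm_num)
              _ = 1 := Real.exp_zero
        _ = ε / 2 := by ring
    calc (L:ℝ) ^ 2 * Real.exp (-(t * ζ'))
        = Real.exp (2 * Real.log L - t * ζ') := by
          rw [hLexp, ← Real.exp_add]; ring_nf
      _ ≤ Real.exp (-1 - |Real.log (2/ε)|) := Real.exp_le_exp.2 hexp
      _ < ε / 2 := hfin
  calc ‖∑ y ∈ (Tset (L:ℝ)).erase 0,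
      (Real.exp (-(t * (1 - phiOf (M L) (q L) (fourierTheta L y)))) : ℂ) * eL L x y‖
      ≤ ∑ y ∈ S, f y := hsum1
    _ = ∑ y ∈ S.filter P, f y + ∑ y ∈ S.filter (fun y => ¬ P y), f y := hsplit.symm
    _ ≤ 16 * Real.exp (-(β/2)) + (L:ℝ) ^ 2 * Real.exp (-(t * ζ')) :=
        add_le_add hsmall hrest
    _ < ε / 2 + ε / 2 := by
        apply add_lt_add_of_le_of_lt hsmallε hrestε
    _ = ε := by ring
end
end

section
/- Assume conditions (P0)–(P3) hold for the sequence (q_{M_L}, φ_{M_L}) indexed by even positive integers L, and assume M_L² / log L → ∞ as L → ∞. Then lim_{L→∞} (1/L²) ∑_{y ∈ T'_L} 1 / (1 − φ_{M_L}(2π y / L)) = 1. -/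
open Filter MeasureTheory Real Finset
open scoped BigOperators

noncomputable section

/-! ### Auxiliary lemmas -/

def boxZ (n : ℕ) : Finset (ℤ × ℤ) := Finset.Icc (-(n:ℤ)) n ×ˢ Finset.Icc (-(n:ℤ)) n

lemma card_boxZ (n : ℕ) : (boxZ n).card = (2*n+1)^2 := by
  rw [boxZ, Finset.card_product, Int.card_Icc]
  have h : ((n:ℤ)+1 - -(n:ℤ)).toNat = 2*n+1 := by omega
  rw [h, sq]

lemma zero_mem_boxZ (n : ℕ) : (0 : ℤ × ℤ) ∈ boxZ n := by
  simp [boxZ, Prod.ext_iff]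

lemma sum_inv_sqNorm_le (n : ℕ) :
    ∑ y ∈ (boxZ n).erase 0, (sqNorm y)⁻¹ ≤ 8 * (harmonic n : ℝ) := by
  induction n with
  | zero => simp [boxZ]; rfl
  | succ n ih =>
    have hsub : (boxZ n).erase 0 ⊆ (boxZ (n+1)).erase 0 := by
      apply Finset.erase_subset_erase
      intro y hy
      simp only [boxZ, Finset.mem_product, Finset.mem_Icc] at *
      push_cast at *
      omega
    rw [← Finset.sum_sdiff hsub]
    have hring : ∀ y ∈ (boxZ (n+1)).erase 0 \ (boxZ n).erase 0,
        (sqNorm y)⁻¹ ≤ (((n:ℝ)+1)^2)⁻¹ := by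
      intro y hy
      simp only [Finset.mem_sdiff, Finset.mem_erase, boxZ, Finset.mem_product,
        Finset.mem_Icc] at hy
      obtain ⟨⟨hy0, hy1⟩, hy2⟩ := hy
      have h1 : ((n:ℤ)+1) ≤ y.1 ∨ y.1 ≤ -((n:ℤ)+1) ∨ ((n:ℤ)+1) ≤ y.2 ∨ y.2 ≤ -((n:ℤ)+1) := by
        by_contra h
        push_neg at h
        exact hy2 ⟨hy0, by omega⟩
      have hbig : ((n:ℝ)+1)^2 ≤ sqNorm y := by
        simp only [sqNorm]
        rcases h1 with h | h | h | h <;>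
          [ (have : ((n:ℝ)+1) ≤ (y.1:ℝ) := by exact_mod_cast h);
            (have : ((y.1:ℝ)) ≤ -((n:ℝ)+1) := by exact_mod_cast h);
            (have : ((n:ℝ)+1) ≤ (y.2:ℝ) := by exact_mod_cast h);
            (have : ((y.2:ℝ)) ≤ -((n:ℝ)+1) := by exact_mod_cast h)] <;>
          nlinarith [sq_nonneg ((y.1:ℝ)), sq_nonneg ((y.2:ℝ)), Nat.cast_nonneg (α := ℝ) n]
      have h0 : (0:ℝ) < ((n:ℝ)+1)^2 := by positivity
      exact inv_anti₀ h0 hbig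
    have hcard : ((boxZ (n+1)).erase 0 \ (boxZ n).erase 0).card = 8*n+8 := by
      rw [Finset.card_sdiff_of_subset hsub, Finset.card_erase_of_mem (zero_mem_boxZ _),
        Finset.card_erase_of_mem (zero_mem_boxZ _), card_boxZ, card_boxZ]
      ring_nf
      omega
    have hsum : ∑ y ∈ (boxZ (n+1)).erase 0 \ (boxZ n).erase 0, (sqNorm y)⁻¹
        ≤ (8*(n:ℝ)+8) * (((n:ℝ)+1)^2)⁻¹ := by
      calc ∑ y ∈ (boxZ (n+1)).erase 0 \ (boxZ n).erase 0, (sqNorm y)⁻¹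
          ≤ ∑ _y ∈ (boxZ (n+1)).erase 0 \ (boxZ n).erase 0, (((n:ℝ)+1)^2)⁻¹ :=
            Finset.sum_le_sum hring
        _ = (8*(n:ℝ)+8) * (((n:ℝ)+1)^2)⁻¹ := by
            rw [Finset.sum_const, hcard]; push_cast; ring
    have hh : (harmonic (n+1) : ℝ) = (harmonic n : ℝ) + ((n:ℝ)+1)⁻¹ := by
      rw [harmonic_succ]; push_cast; ring
    have hrw : (8*(n:ℝ)+8) * (((n:ℝ)+1)^2)⁻¹ = 8 * ((n:ℝ)+1)⁻¹ := by
      have : ((n:ℝ)+1) ≠ 0 := by positivity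
      field_simp
    rw [hh]
    rw [hrw] at hsum
    linarith

lemma sum_inv_sqNorm_Tset (L : ℕ) :
    ∑ y ∈ (Tset L).erase 0, (sqNorm y)⁻¹ ≤ 8 * (1 + Real.log L) := by
  have hsub : (Tset L).erase 0 ⊆ (boxZ L).erase 0 := by
    apply Finset.erase_subset_erase
    intro y hy
    simp only [Tset, boxZ, Finset.mem_product, Finset.mem_Ioc, Finset.mem_Icc] at *
    have h1 : (⌊(L:ℝ)/2⌋ : ℤ) ≤ L := by
      have : (⌊(L:ℝ)/2⌋ : ℝ) ≤ L := by
        refine le_trans (Int.floor_le _) ?_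
        linarith [Nat.cast_nonneg (α := ℝ) L]
      exact_mod_cast this
    have h2 : -(L:ℤ) ≤ ⌊-(L:ℝ)/2⌋ := by
      exact Int.le_floor.mpr (by push_cast; linarith [Nat.cast_nonneg (α := ℝ) L])
    omega
  refine le_trans (Finset.sum_le_sum_of_subset_of_nonneg hsub ?_) ?_
  · intro y _ _
    have : (0:ℝ) ≤ sqNorm y := by simp only [sqNorm]; positivity
    positivity
  · exact le_trans (sum_inv_sqNorm_le L) (by linarith [harmonic_le_one_add_log L])

lemma Tset_even (t : ℕ) :
    Tset ((2*t : ℕ) : ℝ) = Finset.Ioc (-(t:ℤ)) t ×ˢ Finset.Ioc (-(t:ℤ)) t := by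
  have h1 : (((2*t : ℕ)) : ℝ) / 2 = ((t:ℤ) : ℝ) := by push_cast; ring
  unfold Tset
  rw [show -(((2*t:ℕ)):ℝ) / 2 = ((-(t:ℤ):ℤ):ℝ) by push_cast; ring, h1,
    Int.floor_intCast, Int.floor_intCast]

lemma card_Tset_even (t : ℕ) : (Tset ((2*t : ℕ) : ℝ)).card = (2*t)^2 := by
  rw [Tset_even, Finset.card_product, Int.card_Ioc]
  have h : ((t:ℤ) - -(t:ℤ)).toNat = 2*t := by omega
  rw [h, sq]

lemma zero_mem_Tset_even (t : ℕ) (ht : 1 ≤ t) : (0 : ℤ × ℤ) ∈ Tset ((2*t : ℕ) : ℝ) := by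
  rw [Tset_even]
  simp only [Finset.mem_product, Finset.mem_Ioc, Prod.fst_zero, Prod.snd_zero]
  omega

lemma mem_Tset_abs {t : ℕ} {y : ℤ × ℤ} (hy : y ∈ Tset ((2*t : ℕ) : ℝ)) :
    |y.1| ≤ (t:ℤ) ∧ |y.2| ≤ (t:ℤ) := by
  rw [Tset_even] at hy
  simp only [Finset.mem_product, Finset.mem_Ioc] at hy
  constructor <;> rw [abs_le] <;> omega

lemma abs_ft_eq {L : ℕ} (hL : 0 < L) (y : ℤ × ℤ) :
    |2 * π * (y.1:ℝ) / L| = 2 * π * (|y.1| : ℤ) / L ∧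
    |2 * π * (y.2:ℝ) / L| = 2 * π * (|y.2| : ℤ) / L := by
  have hπ : (0:ℝ) ≤ 2 * π := by positivity
  have hL' : (0:ℝ) < L := by exact_mod_cast hL
  constructor <;>
  · rw [abs_div, abs_mul, abs_of_nonneg hπ, abs_of_pos hL']
    push_cast
    ring

lemma supNorm_ft_le_iff {L : ℕ} (hL : 0 < L) (y : ℤ × ℤ) (c : ℝ) :
    supNorm (fourierTheta L y) ≤ c ↔
      2 * π * (|y.1| : ℤ) ≤ c * L ∧ 2 * π * (|y.2| : ℤ) ≤ c * L := by
  have hL' : (0:ℝ) < L := by exact_mod_cast hL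
  obtain ⟨h1, h2⟩ := abs_ft_eq hL y
  unfold supNorm fourierTheta
  simp only [h1, h2, max_le_iff, div_le_iff₀ hL']

lemma supNorm_ft_le_pi {t : ℕ} (ht : 0 < t) {y : ℤ × ℤ} (hy : y ∈ Tset ((2*t : ℕ) : ℝ)) :
    supNorm (fourierTheta (2*t) y) ≤ π := by
  obtain ⟨h1, h2⟩ := mem_Tset_abs hy
  rw [supNorm_ft_le_iff (by omega)]
  have h1' : ((|y.1| : ℤ) : ℝ) ≤ t := by exact_mod_cast h1
  have h2' : ((|y.2| : ℤ) : ℝ) ≤ t := by exact_mod_cast h2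
  have hπ : (0:ℝ) < π := Real.pi_pos
  push_cast at h1' h2' ⊢
  constructor <;> nlinarith

lemma sqNormR_ft {L : ℕ} (hL : 0 < L) (y : ℤ × ℤ) :
    sqNormR (fourierTheta L y) = 4 * π^2 / (L:ℝ)^2 * sqNorm y := by
  have hL' : ((L:ℝ)) ≠ 0 := by
    have : (0:ℝ) < L := by exact_mod_cast hL
    positivity
  unfold sqNormR fourierTheta sqNorm
  field_simp
  ring

lemma sqNorm_pos {y : ℤ × ℤ} (hy : y ≠ 0) : 0 < sqNorm y := by
  have h : y.1 ≠ 0 ∨ y.2 ≠ 0 := by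
    by_contra h
    push_neg at h
    exact hy (Prod.ext h.1 h.2)
  unfold sqNorm
  rcases h with h | h
  · have : ((y.1:ℝ)) ≠ 0 := by exact_mod_cast h
    positivity
  · have : ((y.2:ℝ)) ≠ 0 := by exact_mod_cast h
    positivity

lemma ft_ne_zero {L : ℕ} (hL : 0 < L) {y : ℤ × ℤ} (hy : y ≠ 0) :
    fourierTheta L y ≠ 0 := by
  intro h
  rw [Prod.ext_iff] at h
  simp only [fourierTheta, Prod.fst_zero, Prod.snd_zero, div_eq_zero_iff] at h
  have hL' : ((L:ℝ)) ≠ 0 := by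
    have : (0:ℝ) < L := by exact_mod_cast hL
    positivity
  have hπ : (0:ℝ) < π := Real.pi_pos
  apply hy
  refine Prod.ext ?_ ?_
  · rcases h.1 with h' | h'
    · have : (y.1 : ℝ) = 0 := by
        rcases mul_eq_zero.mp h' with h'' | h''
        · nlinarith
        · exact h''
      exact_mod_cast this
    · exact absurd h' hL'
  · rcases h.2 with h' | h'
    · have : (y.2 : ℝ) = 0 := by
        rcases mul_eq_zero.mp h' with h'' | h''
        · nlinarith
        · exact h''
      exact_mod_cast this
    · exact absurd h' hL'

set_option maxHeartbeats 1600000 in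
/-- Equation (5.4): if (P0)–(P3) hold and `M_L²/log L → ∞`, then
`L⁻² ∑_{y ∈ T'_L} 1/(1 − φ_{M_L}(2πy/L)) → 1`. -/
theorem sum_over_torus_tendsto_one (M : ℕ → ℕ) (q : ℕ → ℤ × ℤ → ℝ) (σ2 : ℝ) (hσ : 0 < σ2)
    (hMeven : ∀ L : ℕ, Even (M L) ∧ 0 < M L)
    (hP0 : ∀ L : ℕ, Even L → 0 < L → CondP0 (M L) (q L))
    (hP1 : CondP1 M q σ2) (hP2 : CondP2 M q) (hP3 : CondP3 M q)
    (hM2 : Tendsto (fun L : ℕ => (M L : ℝ) ^ 2 / Real.log L) evenAtTop atTop) :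
    Tendsto (fun L : ℕ => ((L : ℝ) ^ 2)⁻¹ *
        ∑ y ∈ (Tset L).erase 0, (1 - phiOf (M L) (q L) (fourierTheta L y))⁻¹)
      evenAtTop (nhds 1) := by
  classical
  have hπ : (0:ℝ) < π := Real.pi_pos
  rw [Metric.tendsto_nhds]
  intro ε₀ hε₀
  -- constants
  obtain ⟨δ, hδpos, E1⟩ := hP1 (1/2) (by norm_num)
  obtain ⟨δ', hδ'pos, ζ, hζpos, E2⟩ := hP2 δ hδpos
  set ε : ℝ := min (ε₀/16) (1/2) with hεdef
  have hεpos : 0 < ε := lt_min (by linarith) (by norm_num)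
  have hεhalf : ε ≤ 1/2 := min_le_right _ _
  have hε16 : ε ≤ ε₀/16 := min_le_left _ _
  set a : ℝ := min δ' ((π/8) * min (Real.sqrt ε₀) (Real.sqrt (ε₀ * ζ))) with hadef
  have hs1 : (Real.sqrt ε₀)^2 = ε₀ := Real.sq_sqrt hε₀.le
  have hs2 : (Real.sqrt (ε₀*ζ))^2 = ε₀*ζ := Real.sq_sqrt (by positivity)
  have hapos : 0 < a := by
    apply lt_min hδ'pos
    have h1 : 0 < Real.sqrt ε₀ := Real.sqrt_pos.mpr hε₀
    have h2 : 0 < Real.sqrt (ε₀*ζ) := Real.sqrt_pos.mpr (by positivity)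
    positivity
  have haδ' : a ≤ δ' := min_le_left _ _
  have ha_le1 : a ≤ (π/8) * Real.sqrt ε₀ :=
    (min_le_right _ _).trans (mul_le_mul_of_nonneg_left (min_le_left _ _) (by positivity))
  have ha_le2 : a ≤ (π/8) * Real.sqrt (ε₀*ζ) :=
    (min_le_right _ _).trans (mul_le_mul_of_nonneg_left (min_le_right _ _) (by positivity))
  have ha1 : 8*a^2/π^2 ≤ ε₀/8 := by
    rw [div_le_div_iff₀ (by positivity) (by norm_num)]
    nlinarith only [mul_self_le_mul_self hapos.le ha_le1, Real.sqrt_nonneg ε₀, hs1, hπ]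
  have ha2 : 4*a^2/(π^2*ζ) ≤ ε₀/16 := by
    rw [div_le_div_iff₀ (by positivity) (by norm_num)]
    nlinarith only [mul_self_le_mul_self hapos.le ha_le2, Real.sqrt_nonneg (ε₀*ζ), hs2, hπ, hζpos]
  have E3 := hP3 ε hεpos a hapos
  -- eventual facts
  set K : ℝ := max (64/(σ2*π^2*ε₀)) ((δ/a)^2) with hKdef
  have F5 := hM2.eventually_ge_atTop K
  obtain ⟨L₀, hL₀⟩ := exists_nat_ge (max 3 (max (π/a) (Real.sqrt (8/ε₀))))
  have F6 : ∀ᶠ L in evenAtTop, L₀ ≤ L := (eventually_ge_atTop L₀).filter_mono inf_le_left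
  have F4 : ∀ᶠ L in evenAtTop, Even L := by
    rw [evenAtTop, eventually_inf_principal]
    exact Filter.Eventually.of_forall fun _ h => h
  filter_upwards [E1, E2, E3, F4, F5, F6] with L h1 h2 h3 h4 h5 h6
  -- basic facts about L
  obtain ⟨t, ht0⟩ := h4
  have hL2t : L = 2 * t := by omega
  have hL3 : (3:ℝ) ≤ L := by
    have : ((L₀:ℕ):ℝ) ≤ L := Nat.cast_le.mpr h6
    have h3' : (3:ℝ) ≤ L₀ := le_trans (le_max_left _ _) hL₀
    linarith
  have htpos : 0 < t := by
    have : 0 < L := by exact_mod_cast lt_of_lt_of_le (by norm_num : (0:ℝ) < 3) hL3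
    omega
  have hLpos : 0 < L := by omega
  have hLr : (0:ℝ) < L := by exact_mod_cast hLpos
  have hLa : π ≤ a * L := by
    have h' : π/a ≤ L := le_trans (le_trans (le_max_left _ _) (le_max_right _ _)) (by
      have : ((L₀:ℕ):ℝ) ≤ L := Nat.cast_le.mpr h6
      linarith)
    calc π = (π/a) * a := by field_simp
    _ ≤ (L:ℝ) * a := mul_le_mul_of_nonneg_right h' hapos.le
    _ = a * L := mul_comm _ _
  have hL8 : ((L:ℝ)^2)⁻¹ ≤ ε₀/8 := by
    have h' : Real.sqrt (8/ε₀) ≤ L := le_trans (le_trans (le_max_right _ _) (le_max_right _ _)) (by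
      have : ((L₀:ℕ):ℝ) ≤ L := Nat.cast_le.mpr h6
      linarith)
    have h8 : 8/ε₀ ≤ (L:ℝ)^2 := by
      nlinarith only [h', Real.sq_sqrt (show (0:ℝ) ≤ 8/ε₀ by positivity), Real.sqrt_nonneg (8/ε₀)]
    rw [show ε₀/8 = ((8:ℝ)/ε₀)⁻¹ by field_simp]
    exact inv_anti₀ (by positivity) h8
  have hlogL : 1 ≤ Real.log L := by
    rw [Real.le_log_iff_exp_le hLr]
    calc Real.exp 1 ≤ 2.7182818286 := Real.exp_one_lt_d9.le
    _ ≤ (3:ℝ) := by norm_num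
    _ ≤ L := hL3
  have hlogpos : (0:ℝ) < Real.log L := by linarith
  have hMpos : (0:ℝ) < M L := by exact_mod_cast (hMeven L).2
  have hM2K : K * Real.log L ≤ (M L : ℝ)^2 := (le_div_iff₀ hlogpos).mp h5
  have hMK1 : (64/(σ2*π^2*ε₀)) * Real.log L ≤ (M L:ℝ)^2 :=
    le_trans (mul_le_mul_of_nonneg_right (le_max_left _ _) hlogpos.le) hM2K
  have hMK2 : (δ/a)^2 ≤ (M L:ℝ)^2 := by
    have h' := le_trans (mul_le_mul_of_nonneg_right (le_max_right _ _) hlogpos.le) hM2K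
    calc (δ/a)^2 = (δ/a)^2 * 1 := by ring
    _ ≤ (δ/a)^2 * Real.log L := mul_le_mul_of_nonneg_left hlogL (sq_nonneg _)
    _ ≤ (M L:ℝ)^2 := h'
  have hδa : δ / (M L : ℝ) ≤ a := by
    have hda : δ/a ≤ (M L:ℝ) := by
      by_contra hcon
      push_neg at hcon
      have h2 : (M L:ℝ)^2 < (δ/a)^2 := by
        have := mul_self_lt_mul_self hMpos.le hcon
        simpa [sq] using this
      linarith
    rw [div_le_iff₀ hMpos]
    calc δ = (δ/a) * a := by field_simp
    _ ≤ (M L:ℝ) * a := mul_le_mul_of_nonneg_right hda hapos.le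
    _ = a * M L := mul_comm _ _
  have hM2A : 8*(1+Real.log L)/(σ2*π^2*(M L:ℝ)^2) ≤ ε₀/4 := by
    have h64 : 64 * Real.log L ≤ ε₀ * (σ2*π^2*(M L:ℝ)^2) := by
      have hx := mul_le_mul_of_nonneg_left hMK1 (show (0:ℝ) ≤ σ2*π^2*ε₀ by positivity)
      calc 64 * Real.log L = (σ2*π^2*ε₀) * ((64/(σ2*π^2*ε₀)) * Real.log L) := by
            field_simp
      _ ≤ (σ2*π^2*ε₀) * (M L:ℝ)^2 := hx
      _ = ε₀ * (σ2*π^2*(M L:ℝ)^2) := by ring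
    rw [div_le_div_iff₀ (by positivity) (by norm_num)]
    linarith only [h64, hlogL]
  -- abbreviations
  set mm : ℕ := ⌊a * L / (2*π)⌋₊ with hmm
  set φ : (ℝ × ℝ) → ℝ := phiOf (M L) (q L) with hφdef
  set g : ℤ × ℤ → ℝ := fun y => (1 - φ (fourierTheta L y))⁻¹ with hgdef
  set T' : Finset (ℤ × ℤ) := (Tset (L:ℝ)).erase 0 with hT'
  set P : ℤ × ℤ → Prop := fun y => supNorm (fourierTheta L y) ≤ δ / (M L : ℝ) with hPdef
  set Q : ℤ × ℤ → Prop := fun y => supNorm (fourierTheta L y) ≤ a with hQdef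
  set I : Finset (ℤ × ℤ) := T'.filter P with hI
  set R : Finset (ℤ × ℤ) := T'.filter (fun y => ¬ P y) with hR
  set Mi : Finset (ℤ × ℤ) := R.filter Q with hMi
  set Ou : Finset (ℤ × ℤ) := R.filter (fun y => ¬ Q y) with hOu
  -- facts about members
  have hT'sub : ∀ y ∈ T', y ≠ 0 ∧ y ∈ Tset (L:ℝ) := by
    intro y hy
    rw [hT', Finset.mem_erase] at hy
    exact hy
  have hsupπ : ∀ y ∈ T', supNorm (fourierTheta L y) ≤ π := by
    intro y hy
    obtain ⟨_, hyT⟩ := hT'sub y hy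
    rw [hL2t] at hyT ⊢
    exact supNorm_ft_le_pi htpos (by exact_mod_cast hyT)
  -- box membership for small frequencies
  have hboxmem : ∀ y ∈ T', supNorm (fourierTheta L y) ≤ a → y ∈ boxZ mm := by
    intro y hy hQy
    obtain ⟨habs1, habs2⟩ := (supNorm_ft_le_iff hLpos y a).mp hQy
    have hb : ∀ z : ℤ, 2 * π * (|z| : ℤ) ≤ a * L → z.natAbs ≤ mm := by
      intro z hz
      apply Nat.le_floor
      have hc : ((z.natAbs : ℕ) : ℝ) = ((|z| : ℤ) : ℝ) := by
        simp [Nat.cast_natAbs, Int.cast_abs]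
      rw [hc, le_div_iff₀ (by positivity)]
      linarith
    have hb1 := hb y.1 habs1
    have hb2 := hb y.2 habs2
    simp only [boxZ, Finset.mem_product, Finset.mem_Icc]
    omega
  -- (1) the inner region
  have hIbound : ∀ y ∈ I, 0 < 1 - φ (fourierTheta L y) ∧
      g y ≤ (L:ℝ)^2/(σ2*π^2*(M L:ℝ)^2) * (sqNorm y)⁻¹ := by
    intro y hy
    rw [hI, Finset.mem_filter] at hy
    obtain ⟨hyT', hPy⟩ := hy
    obtain ⟨hy0, hyT⟩ := hT'sub y hyT'
    have hθ0 : fourierTheta L y ≠ 0 := ft_ne_zero hLpos hy0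
    have hsq : 0 < sqNorm y := sqNorm_pos hy0
    have hratio := h1 (fourierTheta L y) hθ0 hPy
    rw [Set.mem_Ioo] at hratio
    have hd : 0 < σ2 * (M L:ℝ)^2 * sqNormR (fourierTheta L y) / 2 := by
      rw [sqNormR_ft hLpos]
      positivity
    have hlow : σ2 * (M L:ℝ)^2 * sqNormR (fourierTheta L y) / 2 * (1/2)
        < 1 - φ (fourierTheta L y) := by
      have := hratio.1
      rw [lt_div_iff₀ hd] at this
      linarith [this]
    have hpos : 0 < 1 - φ (fourierTheta L y) := lt_trans (by positivity) hlow
    refine ⟨hpos, ?_⟩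
    have hinv : g y ≤ (σ2 * (M L:ℝ)^2 * sqNormR (fourierTheta L y) / 2 * (1/2))⁻¹ := by
      rw [hgdef]
      exact inv_anti₀ (by positivity) hlow.le
    refine le_trans hinv (le_of_eq ?_)
    rw [sqNormR_ft hLpos]
    have hL2 : ((L:ℝ)^2) ≠ 0 := by positivity
    field_simp
    ring
  have hInonneg : ∀ y ∈ I, 0 ≤ g y := fun y hy => by
    have := (hIbound y hy).1
    rw [hgdef]
    positivity
  have hIsum : ∑ y ∈ I, g y ≤ (L:ℝ)^2/(σ2*π^2*(M L:ℝ)^2) * (8*(1+Real.log L)) := by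
    calc ∑ y ∈ I, g y ≤ ∑ y ∈ I, (L:ℝ)^2/(σ2*π^2*(M L:ℝ)^2) * (sqNorm y)⁻¹ :=
          Finset.sum_le_sum (fun y hy => (hIbound y hy).2)
    _ = (L:ℝ)^2/(σ2*π^2*(M L:ℝ)^2) * ∑ y ∈ I, (sqNorm y)⁻¹ := by
          rw [Finset.mul_sum]
    _ ≤ (L:ℝ)^2/(σ2*π^2*(M L:ℝ)^2) * ∑ y ∈ T', (sqNorm y)⁻¹ := by
          apply mul_le_mul_of_nonneg_left _ (by positivity)
          apply Finset.sum_le_sum_of_subset_of_nonneg (Finset.filter_subset _ _)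
          intro y hy _
          have := sqNorm_pos (hT'sub y hy).1
          positivity
    _ ≤ (L:ℝ)^2/(σ2*π^2*(M L:ℝ)^2) * (8*(1+Real.log L)) := by
          apply mul_le_mul_of_nonneg_left _ (by positivity)
          exact sum_inv_sqNorm_Tset L
  -- (2) the middle region
  have hMibound : ∀ y ∈ Mi, 0 < 1 - φ (fourierTheta L y) ∧ g y ≤ ζ⁻¹ := by
    intro y hy
    rw [hMi, Finset.mem_filter, hR, Finset.mem_filter] at hy
    obtain ⟨⟨hyT', hnP⟩, hQy⟩ := hy
    have hz := h2 (fourierTheta L y) (le_trans hQy haδ') hnP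
    have hpos : 0 < 1 - φ (fourierTheta L y) := lt_trans hζpos hz
    refine ⟨hpos, ?_⟩
    rw [hgdef]
    exact inv_anti₀ hζpos hz.le
  have hMinonneg : ∀ y ∈ Mi, 0 ≤ g y := fun y hy => by
    have := (hMibound y hy).1
    rw [hgdef]
    positivity
  have hcard2mm : ((2*mm+1 : ℕ) : ℝ) ≤ 2*a*L/π := by
    have hfl : (mm : ℝ) ≤ a * L / (2*π) := Nat.floor_le (by positivity)
    have : (1:ℝ) ≤ a * L / π := by rw [le_div_iff₀ hπ]; linarith
    push_cast
    rw [show 2*a*(L:ℝ)/π = a*L/π + a*L/π by ring]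
    have h2p : (mm:ℝ) ≤ a * L / π / 2 := by
      rw [div_div]
      calc (mm:ℝ) ≤ a * L / (2*π) := hfl
      _ = a*L/(π*2) := by ring_nf
    linarith
  have hMicard : (Mi.card : ℝ) ≤ (2*a*L/π)^2 := by
    have hsub : Mi ⊆ boxZ mm := by
      intro y hy
      rw [hMi, Finset.mem_filter, hR, Finset.mem_filter] at hy
      exact hboxmem y hy.1.1 hy.2
    calc (Mi.card : ℝ) ≤ ((boxZ mm).card : ℝ) := by
          exact_mod_cast Finset.card_le_card hsub
    _ = ((2*mm+1:ℕ):ℝ)^2 := by rw [card_boxZ]; push_cast; ring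
    _ ≤ (2*a*L/π)^2 := by
          apply pow_le_pow_left₀ (by positivity) hcard2mm
  have hMisum : ∑ y ∈ Mi, g y ≤ (2*a*L/π)^2 * ζ⁻¹ := by
    calc ∑ y ∈ Mi, g y ≤ ∑ _y ∈ Mi, ζ⁻¹ :=
          Finset.sum_le_sum (fun y hy => (hMibound y hy).2)
    _ = (Mi.card : ℝ) * ζ⁻¹ := by rw [Finset.sum_const, nsmul_eq_mul]
    _ ≤ (2*a*L/π)^2 * ζ⁻¹ := mul_le_mul_of_nonneg_right hMicard (by positivity)
  -- (3) the outer region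
  have hOubound : ∀ y ∈ Ou, |g y - 1| ≤ 2*ε := by
    intro y hy
    rw [hOu, Finset.mem_filter, hR, Finset.mem_filter] at hy
    obtain ⟨⟨hyT', hnP⟩, hnQ⟩ := hy
    have hφs := h3 (fourierTheta L y) (hsupπ y hyT') hnQ
    have hφhalf : |φ (fourierTheta L y)| < 1/2 := lt_of_lt_of_le hφs hεhalf
    have hpos : (1:ℝ)/2 ≤ 1 - φ (fourierTheta L y) := by
      have := abs_lt.mp hφhalf
      linarith [this.2]
    have hne : 1 - φ (fourierTheta L y) ≠ 0 := by linarith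
    have hrw : g y - 1 = φ (fourierTheta L y) * (1 - φ (fourierTheta L y))⁻¹ := by
      rw [hgdef]
      field_simp
      ring
    rw [hrw, abs_mul, abs_of_nonneg (inv_nonneg.mpr (by linarith : (0:ℝ) ≤ 1 - φ (fourierTheta L y)))]
    have hinv2 : (1 - φ (fourierTheta L y))⁻¹ ≤ 2 := by
      rw [show (2:ℝ) = ((1:ℝ)/2)⁻¹ by norm_num]
      exact inv_anti₀ (by norm_num) hpos
    calc |φ (fourierTheta L y)| * (1 - φ (fourierTheta L y))⁻¹ ≤ ε * 2 := by
          apply mul_le_mul hφs.le hinv2 (by positivity) hεpos.le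
    _ = 2*ε := by ring
  have hOusum : |∑ y ∈ Ou, g y - (Ou.card : ℝ)| ≤ 2*ε * Ou.card := by
    have hrw : ∑ y ∈ Ou, g y - (Ou.card : ℝ) = ∑ y ∈ Ou, (g y - 1) := by
      rw [Finset.sum_sub_distrib, Finset.sum_const, nsmul_eq_mul, mul_one]
    rw [hrw]
    calc |∑ y ∈ Ou, (g y - 1)| ≤ ∑ y ∈ Ou, |g y - 1| := Finset.abs_sum_le_sum_abs _ _
    _ ≤ ∑ _y ∈ Ou, 2*ε := Finset.sum_le_sum hOubound
    _ = 2*ε * Ou.card := by rw [Finset.sum_const, nsmul_eq_mul]; ring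
  -- cardinalities
  have h0mem : (0 : ℤ × ℤ) ∈ Tset (L:ℝ) := by
    rw [hL2t]; exact_mod_cast zero_mem_Tset_even t htpos
  have hcardT : (Tset (L:ℝ)).card = L^2 := by
    rw [hL2t]; exact_mod_cast card_Tset_even t
  have hT'card : (T'.card : ℝ) = (L:ℝ)^2 - 1 := by
    rw [hT', Finset.card_erase_of_mem h0mem, hcardT,
      Nat.cast_sub (Nat.one_le_pow 2 L hLpos)]
    push_cast
    ring
  have hIcard : (I.card : ℝ) ≤ (2*a*L/π)^2 := by
    have hsub : I ⊆ boxZ mm := by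
      intro y hy
      rw [hI, Finset.mem_filter] at hy
      exact hboxmem y hy.1 (le_trans hy.2 hδa)
    calc (I.card : ℝ) ≤ ((boxZ mm).card : ℝ) := by
          exact_mod_cast Finset.card_le_card hsub
    _ = ((2*mm+1:ℕ):ℝ)^2 := by rw [card_boxZ]; push_cast; ring
    _ ≤ (2*a*L/π)^2 := by
          apply pow_le_pow_left₀ (by positivity) hcard2mm
  have hsplit1 : I.card + R.card = T'.card := Finset.card_filter_add_card_filter_not _
  have hsplit2 : Mi.card + Ou.card = R.card := Finset.card_filter_add_card_filter_not _
  have hcards : I.card + Mi.card + Ou.card = T'.card := by omega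
  have hOucard_le : (Ou.card : ℝ) ≤ (L:ℝ)^2 - 1 := by
    rw [← hT'card]
    have h' : Ou.card ≤ T'.card := by omega
    exact_mod_cast h'
  have hOucard_ge : (L:ℝ)^2 - (Ou.card : ℝ) ≤ 1 + 2*(2*a*L/π)^2 := by
    have : (T'.card : ℝ) = (I.card : ℝ) + (Mi.card : ℝ) + (Ou.card : ℝ) := by
      push_cast [← hsplit1, ← hsplit2]
      ring
    rw [hT'card] at this
    linarith [hIcard, hMicard]
  -- sum decomposition
  have hsumsplit : ∑ y ∈ T', g y = ∑ y ∈ I, g y + ∑ y ∈ Mi, g y + ∑ y ∈ Ou, g y := by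
    rw [hI, hMi, hOu, hR]
    rw [← Finset.sum_filter_add_sum_filter_not T' P g,
        ← Finset.sum_filter_add_sum_filter_not (T'.filter (fun y => ¬ P y)) Q g]
    ring
  -- final estimates
  set Linv : ℝ := ((L:ℝ)^2)⁻¹ with hLinv
  have hLinvpos : 0 < Linv := by rw [hLinv]; positivity
  have hA : Linv * ∑ y ∈ I, g y ≤ ε₀/4 := by
    calc Linv * ∑ y ∈ I, g y
        ≤ Linv * ((L:ℝ)^2/(σ2*π^2*(M L:ℝ)^2) * (8*(1+Real.log L))) :=
          mul_le_mul_of_nonneg_left hIsum hLinvpos.le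
    _ = 8*(1+Real.log L)/(σ2*π^2*(M L:ℝ)^2) := by
          rw [hLinv]
          field_simp
    _ ≤ ε₀/4 := hM2A
  have hAnn : 0 ≤ Linv * ∑ y ∈ I, g y :=
    mul_nonneg hLinvpos.le (Finset.sum_nonneg hInonneg)
  have hB : Linv * ∑ y ∈ Mi, g y ≤ ε₀/16 := by
    calc Linv * ∑ y ∈ Mi, g y ≤ Linv * ((2*a*L/π)^2 * ζ⁻¹) :=
          mul_le_mul_of_nonneg_left hMisum hLinvpos.le
    _ = 4*a^2/(π^2*ζ) := by
          rw [hLinv]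
          field_simp
          ring
    _ ≤ ε₀/16 := ha2
  have hBnn : 0 ≤ Linv * ∑ y ∈ Mi, g y :=
    mul_nonneg hLinvpos.le (Finset.sum_nonneg hMinonneg)
  have hC : |Linv * (∑ y ∈ Ou, g y - (Ou.card : ℝ))| ≤ ε₀/8 := by
    rw [abs_mul, abs_of_pos hLinvpos]
    calc Linv * |∑ y ∈ Ou, g y - (Ou.card : ℝ)| ≤ Linv * (2*ε * Ou.card) :=
          mul_le_mul_of_nonneg_left hOusum hLinvpos.le
    _ ≤ Linv * (2*ε * (L:ℝ)^2) := by
          have hOL : (Ou.card:ℝ) ≤ (L:ℝ)^2 := by linarith only [hOucard_le]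
          apply mul_le_mul_of_nonneg_left _ hLinvpos.le
          exact mul_le_mul_of_nonneg_left hOL (by positivity)
    _ = 2*ε := by
          rw [hLinv]
          field_simp
    _ ≤ ε₀/8 := by linarith
  have hD : |Linv * (Ou.card : ℝ) - 1| ≤ ε₀/4 := by
    have heq : Linv * (Ou.card : ℝ) - 1 = -(Linv * ((L:ℝ)^2 - (Ou.card:ℝ))) := by
      rw [hLinv]
      field_simp
      ring
    rw [heq, abs_neg, abs_of_nonneg (by
      apply mul_nonneg hLinvpos.le
      linarith)]
    calc Linv * ((L:ℝ)^2 - (Ou.card:ℝ)) ≤ Linv * (1 + 2*(2*a*L/π)^2) :=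
          mul_le_mul_of_nonneg_left hOucard_ge hLinvpos.le
    _ = Linv + 8*a^2/π^2 := by
          rw [hLinv]
          field_simp
          ring
    _ ≤ ε₀/8 + ε₀/8 := add_le_add hL8 ha1
    _ = ε₀/4 := by ring
  -- put it all together
  rw [Real.dist_eq]
  have hdecomp : Linv * ∑ y ∈ T', g y - 1 =
      (Linv * ∑ y ∈ I, g y) + (Linv * ∑ y ∈ Mi, g y)
      + (Linv * (∑ y ∈ Ou, g y - (Ou.card : ℝ))) + (Linv * (Ou.card : ℝ) - 1) := by
    rw [hsumsplit]
    ring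
  calc |Linv * ∑ y ∈ T', g y - 1|
      ≤ |(Linv * ∑ y ∈ I, g y) + (Linv * ∑ y ∈ Mi, g y)
        + (Linv * (∑ y ∈ Ou, g y - (Ou.card : ℝ)))| + |Linv * (Ou.card : ℝ) - 1| := by
        rw [hdecomp]
        exact abs_add_le _ _
  _ ≤ |(Linv * ∑ y ∈ I, g y) + (Linv * ∑ y ∈ Mi, g y)|
        + |Linv * (∑ y ∈ Ou, g y - (Ou.card : ℝ))| + |Linv * (Ou.card : ℝ) - 1| := by
        gcongr
        exact abs_add_le _ _
  _ ≤ ε₀/4 + ε₀/16 + ε₀/8 + ε₀/4 := by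
        have : |(Linv * ∑ y ∈ I, g y) + (Linv * ∑ y ∈ Mi, g y)| ≤ ε₀/4 + ε₀/16 := by
          rw [abs_of_nonneg (by linarith)]
          linarith
        linarith [hC, hD]
  _ < ε₀ := by linarith
end
end
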